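/- Let m, n ≥ 1, let G ∈ ℝ^{m×n}, and let Δ ≥ 0. Define the single-level feasible set F := {(x, D, y, ω, v) ∈ Δ(m) × 𝒟 × Δ(n) × Δ(m) × ℝ : ((G+D)y)ᵢ ≥ v for all i, and ((G+D)ᵀω)ⱼ ≤ v for all j}, and the bilevel feasible set B := {(x, D, y) : x ∈ Δ(m), D ∈ 𝒟, y ∈ S(G+D)}. If (x*, D*, y*, ω*, v*) ∈ F satisfies x*ᵀG y* ≤ xᵀGy for all (x, D, y, ω, v) ∈ F, then (x*, D*, y*) ∈ B and x*ᵀG y* ≤ xᵀGy for all (x, D, y) ∈ B; that is, an optimal point of the single-level bilinear program yields an optimal solution of the bilevel deception program. -/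

import Mathlib

open Matrix Finset

/-- Set of admissible (stealthy) deceptions: every column has ℓ1 norm at most `Δ`. -/
def Dset (m n : ℕ) (Δ : ℝ) : Set (Matrix (Fin m) (Fin n) ℝ) :=
  {D | ∀ j, ∑ i, |D i j| ≤ Δ}

/-- Row player's best-response value against `y`: `min_{x ∈ Δ(m)} xᵀ A y`. -/
noncomputable def innerMin {m n : ℕ} (A : Matrix (Fin m) (Fin n) ℝ) (y : Fin n → ℝ) : ℝ :=
  sInf {r | ∃ x ∈ stdSimplex ℝ (Fin m), r = x ⬝ᵥ A *ᵥ y}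

/-- Value of the zero-sum game `A`: `max_{y ∈ Δ(n)} min_{x ∈ Δ(m)} xᵀ A y`. -/
noncomputable def gameValue {m n : ℕ} (A : Matrix (Fin m) (Fin n) ℝ) : ℝ :=
  sSup {r | ∃ y ∈ stdSimplex ℝ (Fin n), r = innerMin A y}

/-- Column player's security-policy set `S(A)`. -/
def secPolicies {m n : ℕ} (A : Matrix (Fin m) (Fin n) ℝ) : Set (Fin n → ℝ) :=
  {y | y ∈ stdSimplex ℝ (Fin n) ∧ ∀ i, gameValue A ≤ (A *ᵥ y) i}

/-- Set of inducible values `V_ind(G)`. -/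
def Vind {m n : ℕ} (G : Matrix (Fin m) (Fin n) ℝ) (Δ : ℝ) : Set ℝ :=
  {v | ∃ D ∈ Dset m n Δ, ∃ y ∈ stdSimplex ℝ (Fin n), ∀ i, v ≤ ((G + D) *ᵥ y) i}

/-- Robust victim objective: `min_{x ∈ Δ(m), D ∈ 𝒟} xᵀ (G' - D) y`. -/
noncomputable def robustObj {m n : ℕ} (G' : Matrix (Fin m) (Fin n) ℝ) (Δ : ℝ)
    (y : Fin n → ℝ) : ℝ :=
  sInf {r | ∃ x ∈ stdSimplex ℝ (Fin m), ∃ D ∈ Dset m n Δ, r = x ⬝ᵥ (G' - D) *ᵥ y}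

/-- Feasibility for the single-level bilinear program (7). -/
def Feas {m n : ℕ} (G : Matrix (Fin m) (Fin n) ℝ) (Δ : ℝ)
    (x : Fin m → ℝ) (D : Matrix (Fin m) (Fin n) ℝ) (y : Fin n → ℝ)
    (ω : Fin m → ℝ) (v : ℝ) : Prop :=
  x ∈ stdSimplex ℝ (Fin m) ∧ D ∈ Dset m n Δ ∧ y ∈ stdSimplex ℝ (Fin n) ∧
    ω ∈ stdSimplex ℝ (Fin m) ∧ (∀ i, v ≤ ((G + D) *ᵥ y) i) ∧
    (∀ j, ((G + D)ᵀ *ᵥ ω) j ≤ v)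




section Aux
variable {m n : ℕ}

lemma mySingle_mem (i : Fin m) :
    (Pi.single i 1 : Fin m → ℝ) ∈ stdSimplex ℝ (Fin m) := by
  constructor
  · intro j; by_cases h : j = i <;> simp [Pi.single_apply, h]
  · simp [Pi.single_apply]

lemma single_dot (i : Fin m) (w : Fin m → ℝ) :
    (Pi.single i 1 : Fin m → ℝ) ⬝ᵥ w = w i := by
  simp [dotProduct, Pi.single_apply]

lemma dot_eq_transpose (A : Matrix (Fin m) (Fin n) ℝ) (x : Fin m → ℝ) (y : Fin n → ℝ) :
    x ⬝ᵥ A *ᵥ y = (Aᵀ *ᵥ x) ⬝ᵥ y := by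
  rw [dotProduct_mulVec, mulVec_transpose]

lemma dot_expand (x : Fin m → ℝ) (w : Fin m → ℝ) : x ⬝ᵥ w = ∑ i, x i * w i := rfl

lemma mulVec_single_eq (A : Matrix (Fin m) (Fin n) ℝ) (j : Fin n) :
    A *ᵥ (Pi.single j 1 : Fin n → ℝ) = fun i => A i j := by
  funext i; simp [mulVec, dotProduct, Pi.single_apply]


section Aux
variable {m n : ℕ}

lemma innerMin_le (A : Matrix (Fin m) (Fin n) ℝ) {y : Fin n → ℝ} {x : Fin m → ℝ}
    (hx : x ∈ stdSimplex ℝ (Fin m)) : innerMin A y ≤ x ⬝ᵥ A *ᵥ y := by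
  apply csInf_le
  · refine ⟨-∑ i, |(A *ᵥ y) i|, ?_⟩
    rintro r ⟨x', hx', rfl⟩
    have h1 : ∀ i, x' i * (A *ᵥ y) i ≥ x' i * (-∑ k, |(A *ᵥ y) k|) := by
      intro i
      apply mul_le_mul_of_nonneg_left _ (hx'.1 i)
      calc -∑ k, |(A *ᵥ y) k| ≤ -|(A *ᵥ y) i| := by
            apply neg_le_neg
            exact Finset.single_le_sum (f := fun k => |(A *ᵥ y) k|) (fun k _ => abs_nonneg _) (mem_univ i)
        _ ≤ (A *ᵥ y) i := neg_abs_le _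
    calc -∑ i, |(A *ᵥ y) i| = ∑ i, x' i * (-∑ k, |(A *ᵥ y) k|) := by
          rw [← Finset.sum_mul, hx'.2, one_mul]
      _ ≤ ∑ i, x' i * (A *ᵥ y) i := Finset.sum_le_sum (fun i _ => h1 i)
      _ = x' ⬝ᵥ A *ᵥ y := rfl
  · exact ⟨x, hx, rfl⟩

lemma le_innerMin (hm : 1 ≤ m) (A : Matrix (Fin m) (Fin n) ℝ) {y : Fin n → ℝ} {c : ℝ}
    (h : ∀ i, c ≤ (A *ᵥ y) i) : c ≤ innerMin A y := by
  have hne : {r | ∃ x ∈ stdSimplex ℝ (Fin m), r = x ⬝ᵥ A *ᵥ y}.Nonempty :=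
    ⟨_, Pi.single ⟨0, hm⟩ 1, single_mem_stdSimplex ℝ _, rfl⟩
  apply le_csInf hne
  rintro r ⟨x, hx, rfl⟩
  calc c = ∑ i, x i * c := by rw [← Finset.sum_mul, hx.2, one_mul]
    _ ≤ ∑ i, x i * (A *ᵥ y) i :=
        Finset.sum_le_sum (fun i _ => mul_le_mul_of_nonneg_left (h i) (hx.1 i))
    _ = x ⬝ᵥ A *ᵥ y := rfl

lemma gameValue_le (hn : 1 ≤ n) (A : Matrix (Fin m) (Fin n) ℝ) {ω : Fin m → ℝ} {v : ℝ}
    (hω : ω ∈ stdSimplex ℝ (Fin m)) (h : ∀ j, (Aᵀ *ᵥ ω) j ≤ v) : gameValue A ≤ v := by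
  have hne : {r | ∃ y ∈ stdSimplex ℝ (Fin n), r = innerMin A y}.Nonempty :=
    ⟨_, Pi.single ⟨0, hn⟩ 1, single_mem_stdSimplex ℝ _, rfl⟩
  apply csSup_le hne
  rintro r ⟨y, hy, rfl⟩
  calc innerMin A y ≤ ω ⬝ᵥ A *ᵥ y := innerMin_le A hω
    _ = ∑ j, (Aᵀ *ᵥ ω) j * y j := by
        rw [dotProduct_mulVec, ← mulVec_transpose]; rfl
    _ ≤ ∑ j, v * y j :=
        Finset.sum_le_sum (fun j _ => mul_le_mul_of_nonneg_right (h j) (hy.1 j))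
    _ = v := by rw [← Finset.mul_sum, hy.2, mul_one]

lemma innerMin_le_gameValue (hm : 1 ≤ m) (A : Matrix (Fin m) (Fin n) ℝ) {y : Fin n → ℝ}
    (hy : y ∈ stdSimplex ℝ (Fin n)) : innerMin A y ≤ gameValue A := by
  have hbdd : BddAbove {r | ∃ y ∈ stdSimplex ℝ (Fin n), r = innerMin A y} := by
    refine ⟨∑ i, ∑ j, |A i j|, ?_⟩
    rintro r ⟨y', hy', rfl⟩
    set i0 : Fin m := ⟨0, hm⟩
    calc innerMin A y' ≤ (Pi.single i0 1 : Fin m → ℝ) ⬝ᵥ A *ᵥ y' :=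
        innerMin_le A (single_mem_stdSimplex ℝ _)
    _ = ∑ j, A i0 j * y' j := by simp [dotProduct, mulVec, Pi.single_apply]
    _ ≤ ∑ j, |A i0 j| := by
        apply Finset.sum_le_sum
        intro j _
        calc A i0 j * y' j ≤ |A i0 j| * y' j :=
              mul_le_mul_of_nonneg_right (le_abs_self _) (hy'.1 j)
          _ ≤ |A i0 j| * 1 := by
              apply mul_le_mul_of_nonneg_left _ (abs_nonneg _)
              calc y' j ≤ ∑ k, y' k :=
                    Finset.single_le_sum (fun k _ => hy'.1 k) (mem_univ j)
                _ = 1 := hy'.2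
          _ = |A i0 j| := mul_one _
    _ ≤ ∑ i, ∑ j, |A i j| := by
        exact Finset.single_le_sum (f := fun i => ∑ j, |A i j|)
          (fun i _ => Finset.sum_nonneg fun j _ => abs_nonneg _) (mem_univ i0)
  exact le_csSup hbdd ⟨y, hy, rfl⟩

section M
variable {m n : ℕ}

lemma single_smul_eq (i : Fin m) (c : ℝ) :
    (Pi.single i c : Fin m → ℝ) = c • (Pi.single i 1 : Fin m → ℝ) := by
  funext j; by_cases h : j = i <;> simp [Pi.single_apply, h]

lemma phi_expand (φ : (Fin m → ℝ) →L[ℝ] ℝ) (z : Fin m → ℝ) :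
    φ z = ∑ i, z i * φ (Pi.single i 1) := by
  conv_lhs => rw [← Finset.univ_sum_single z]
  rw [map_sum]
  congr 1; funext i
  rw [single_smul_eq, _root_.map_smul]; rfl

lemma mulVec_continuous (A : Matrix (Fin m) (Fin n) ℝ) :
    Continuous fun y : Fin n → ℝ => A *ᵥ y := by
  apply continuous_pi
  intro i
  simp only [mulVec, dotProduct]
  exact continuous_finset_sum _ fun j _ => continuous_const.mul (continuous_apply j)

lemma tmulVec_continuous (A : Matrix (Fin m) (Fin n) ℝ) (j : Fin n) :
    Continuous fun ω : Fin m → ℝ => (Aᵀ *ᵥ ω) j := by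
  simp only [mulVec, dotProduct]
  exact continuous_finset_sum _ fun i _ => continuous_const.mul (continuous_apply i)

lemma minimax {m n : ℕ} (hm : 1 ≤ m) (hn : 1 ≤ n) (A : Matrix (Fin m) (Fin n) ℝ) :
    ∃ ω ∈ stdSimplex ℝ (Fin m), ∀ j, (Aᵀ *ᵥ ω) j ≤ gameValue A := by
  have hne : (univ : Finset (Fin n)).Nonempty := ⟨⟨0, hn⟩, mem_univ _⟩
  set f : (Fin m → ℝ) → ℝ := fun ω => univ.sup' hne (fun j => (Aᵀ *ᵥ ω) j) with hf
  have hcont : Continuous f := by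
    apply Continuous.finset_sup'_apply hne
    intro j _
    exact tmulVec_continuous A j
  obtain ⟨ω0, hω0, hmin⟩ := (isCompact_stdSimplex ℝ (Fin m)).exists_isMinOn
    ⟨_, single_mem_stdSimplex ℝ (⟨0, hm⟩ : Fin m)⟩ hcont.continuousOn
  set c := f ω0 with hc
  have key : ∃ y ∈ stdSimplex ℝ (Fin n), ∀ i, c ≤ (A *ᵥ y) i := by
    by_contra hcon
    push_neg at hcon
    set K : Set (Fin m → ℝ) := (fun y => A *ᵥ y) '' stdSimplex ℝ (Fin n) with hK
    set P : Set (Fin m → ℝ) := {z | ∀ i, c ≤ z i} with hP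
    have hPeq : P = ⋂ i, (fun z : Fin m → ℝ => z i) ⁻¹' Set.Ici c := by
      ext z; simp [hP, Set.mem_iInter]
    have hKconv : Convex ℝ K := by
      have := (convex_stdSimplex ℝ (Fin n)).linear_image (Matrix.mulVecLin A)
      exact this
    have hKcomp : IsCompact K := (isCompact_stdSimplex ℝ _).image (mulVec_continuous A)
    have hPconv : Convex ℝ P := by
      rw [hPeq]
      exact convex_iInter fun i => (convex_Ici c).linear_preimage (LinearMap.proj (R := ℝ) (φ := fun _ : Fin m => ℝ) i)
    have hPcl : IsClosed P := by
      rw [hPeq]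
      exact isClosed_iInter fun i => (isClosed_Ici).preimage (continuous_apply i)
    have hdisj : Disjoint K P := by
      rw [Set.disjoint_left]
      rintro z ⟨y, hy, rfl⟩ hzP
      obtain ⟨i, hi⟩ := hcon y hy
      exact absurd (hzP i) (not_le.2 hi)
    obtain ⟨φ, u, v, hKu, huv, hPv⟩ :=
      geometric_hahn_banach_compact_closed hKconv hKcomp hPconv hPcl hdisj
    set g : Fin m → ℝ := fun i => φ (Pi.single i 1) with hg
    have hone : (fun _ : Fin m => c) ∈ P := fun i => le_refl c
    have hφv : v < φ (fun _ : Fin m => c) := hPv _ hone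
    have hgnn : ∀ i, 0 ≤ g i := by
      intro i
      by_contra hneg
      push_neg at hneg
      set t : ℝ := (φ (fun _ : Fin m => c) - v) / (-g i) with ht
      have htpos : 0 < t := div_pos (by linarith) (by linarith)
      have hmem : ((fun _ : Fin m => c) + t • (Pi.single i 1 : Fin m → ℝ)) ∈ P := by
        intro k
        have h0 : (0:ℝ) ≤ t • (Pi.single i 1 : Fin m → ℝ) k := by
          by_cases hk : k = i <;> simp [Pi.single_apply, hk] <;> positivity
        have : ((fun _ : Fin m => c) + t • (Pi.single i 1 : Fin m → ℝ)) k
            = c + t • (Pi.single i 1 : Fin m → ℝ) k := rfl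
        rw [this]
        linarith
      have hlt := hPv _ hmem
      rw [map_add, _root_.map_smul] at hlt
      have hgne : g i ≠ 0 := ne_of_lt hneg
      have htg : t * g i = -(φ (fun _ : Fin m => c) - v) := by
        rw [ht, div_neg, neg_mul, div_mul_cancel₀ _ hgne, neg_sub]
      have : φ ((fun _ : Fin m => c)) + t • φ (Pi.single i 1)
          = φ (fun _ : Fin m => c) + t * g i := rfl
      rw [this, htg] at hlt
      linarith
    set s := ∑ i, g i with hs
    have hs0 : 0 ≤ s := Finset.sum_nonneg fun i _ => hgnn i
    have hφc : φ (fun _ : Fin m => c) = c * s := by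
      rw [phi_expand, hs, Finset.mul_sum]
    have hspos : 0 < s := by
      rcases eq_or_lt_of_le hs0 with heq | h
      · exfalso
        have hg0 : ∀ i, g i = 0 := by
          intro i
          exact (Finset.sum_eq_zero_iff_of_nonneg (fun i _ => hgnn i)).1 heq.symm i (mem_univ i)
        have hφ0 : ∀ z, φ z = 0 := by
          intro z
          rw [phi_expand]
          exact Finset.sum_eq_zero fun i _ => by
            rw [show φ (Pi.single i 1) = g i from rfl, hg0, mul_zero]
        have h1 := hKu _ ⟨_, single_mem_stdSimplex ℝ (⟨0, hn⟩ : Fin n), rfl⟩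
        rw [hφ0] at h1 hφv
        linarith
      · exact h
    set ω : Fin m → ℝ := fun i => g i / s with hω
    have hωmem : ω ∈ stdSimplex ℝ (Fin m) := by
      constructor
      · exact fun i => div_nonneg (hgnn i) hs0
      · rw [hω]
        simp only [div_eq_mul_inv, ← Finset.sum_mul, ← hs]
        field_simp
    have hlt : ∀ j, (Aᵀ *ᵥ ω) j < c := by
      intro j
      have hKj : φ (A *ᵥ (Pi.single j 1 : Fin n → ℝ)) < u :=
        hKu _ ⟨_, single_mem_stdSimplex ℝ j, rfl⟩
      have hPc : v < c * s := by rw [← hφc]; exact hφv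
      have hφAej : φ (A *ᵥ (Pi.single j 1 : Fin n → ℝ)) = ∑ i, A i j * g i := by
        rw [phi_expand, mulVec_single_eq]
      have hAω : (Aᵀ *ᵥ ω) j = (∑ i, A i j * g i) / s := by
        simp only [mulVec, dotProduct, transpose_apply, hω, Finset.sum_div]
        congr 1; funext i; ring
      rw [hAω, div_lt_iff₀ hspos]
      calc ∑ i, A i j * g i = φ (A *ᵥ (Pi.single j 1 : Fin n → ℝ)) := hφAej.symm
        _ < u := hKj
        _ < v := huv
        _ < c * s := hPc
    have hfc : c ≤ f ω := hmin hωmem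
    have hflt : f ω < c := by
      rw [hf]
      exact (Finset.sup'_lt_iff hne).2 fun j _ => hlt j
    linarith
  obtain ⟨y, hy, hcy⟩ := key
  refine ⟨ω0, hω0, fun j => ?_⟩
  have h1 : (Aᵀ *ᵥ ω0) j ≤ c := Finset.le_sup' _ (mem_univ j)
  have h2 : c ≤ gameValue A :=
    le_trans (le_innerMin hm A hcy) (innerMin_le_gameValue hm A hy)
  linarith


/-- an optimal point of the single-level bilinear program yields an optimal
solution of the bilevel deception program. -/
theorem single_level_solves_bilevel {m n : ℕ} (hm : 1 ≤ m) (hn : 1 ≤ n)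
    (G : Matrix (Fin m) (Fin n) ℝ) (Δ : ℝ) (hΔ : 0 ≤ Δ)
    (xs : Fin m → ℝ) (Ds : Matrix (Fin m) (Fin n) ℝ) (ys : Fin n → ℝ)
    (ωs : Fin m → ℝ) (vs : ℝ)
    (hfeas : Feas G Δ xs Ds ys ωs vs)
    (hopt : ∀ (x : Fin m → ℝ) (D : Matrix (Fin m) (Fin n) ℝ) (y : Fin n → ℝ)
      (ω : Fin m → ℝ) (v : ℝ), Feas G Δ x D y ω v → xs ⬝ᵥ G *ᵥ ys ≤ x ⬝ᵥ G *ᵥ y) :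
    (xs ∈ stdSimplex ℝ (Fin m) ∧ Ds ∈ Dset m n Δ ∧ ys ∈ secPolicies (G + Ds)) ∧
      ∀ x ∈ stdSimplex ℝ (Fin m), ∀ D ∈ Dset m n Δ, ∀ y ∈ secPolicies (G + D),
        xs ⬝ᵥ G *ᵥ ys ≤ x ⬝ᵥ G *ᵥ y := by
  obtain ⟨hxs, hDs, hys, hωs, hv1, hv2⟩ := hfeas
  have hsec : ys ∈ secPolicies (G + Ds) := by
    refine ⟨hys, fun i => ?_⟩
    exact le_trans (gameValue_le hn (G + Ds) hωs hv2) (hv1 i)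
  refine ⟨⟨hxs, hDs, hsec⟩, ?_⟩
  intro x hx D hD y hy
  obtain ⟨hymem, hyge⟩ := hy
  obtain ⟨ω, hωmem, hωle⟩ := minimax hm hn (G + D)
  exact hopt x D y ω (gameValue (G + D)) ⟨hx, hD, hymem, hωmem, hyge, hωle⟩
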